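/- Every word w over the two-letter alphabet {a, b} with at most five blocks in total is an isoterm for UT_2: w ∼_2 v implies v = w. -/

import Mathlib

/-- Tropical (max-plus) matrix multiplication over `ℝ ∪ {-∞}`. -/
noncomputable def tmul {n : ℕ} (A B : Matrix (Fin n) (Fin n) EReal) :
    Matrix (Fin n) (Fin n) EReal :=
  fun i j => ⨆ k, A i k + B k j

/-- The tropical identity matrix: `0` on the diagonal, `-∞` elsewhere. -/
noncomputable def tOne {n : ℕ} : Matrix (Fin n) (Fin n) EReal :=
  fun i j => if i = j then 0 else ⊥

/-- Tropical product of a list of matrices. -/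
noncomputable def tProd {n : ℕ} (l : List (Matrix (Fin n) (Fin n) EReal)) :
    Matrix (Fin n) (Fin n) EReal :=
  l.foldr tmul tOne

/-- A matrix is upper triangular if all entries below the diagonal are `-∞`. -/
def IsUT {n : ℕ} (A : Matrix (Fin n) (Fin n) EReal) : Prop :=
  ∀ i j : Fin n, j < i → A i j = ⊥

/-- `w = v` is a semigroup identity for `UT_n`: every assignment of upper
triangular tropical matrices to the letters gives equal products. -/
noncomputable def UTId (n : ℕ) {σ : Type*} (w v : List σ) : Prop :=
  ∀ φ : σ → Matrix (Fin n) (Fin n) EReal, (∀ s, IsUT (φ s)) →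
    tProd (w.map φ) = tProd (v.map φ)


/-- The list of blocks (maximal runs) of `w`, each represented by its letter. -/
def blockList {σ : Type*} [DecidableEq σ] (w : List σ) : List σ :=
  w.destutter (· ≠ ·)

/-! ### Auxiliary machinery -/

noncomputable def eS (α β : ℝ) : List ℕ → EReal
  | [] => ⊥
  | c :: t => (↑(α * (c : ℝ)) : EReal) ⊔ ((β : EReal) + eS α β t)

def gam : List Bool → List ℕ
  | [] => []
  | false :: t => (gam t).map (· + 1)
  | true :: t => 0 :: gam t

lemma ereal_add_sup (a : EReal) (u v : EReal) : a + (u ⊔ v) = (a + u) ⊔ (a + v) := by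
  rcases le_total u v with h | h
  · rw [sup_eq_right.2 h, sup_eq_right.2 (add_le_add_right h a)]
  · rw [sup_eq_left.2 h, sup_eq_left.2 (add_le_add_right h a)]

lemma eS_map_succ (α β : ℝ) (L : List ℕ) :
    eS α β (L.map (· + 1)) = (α : EReal) + eS α β L := by
  induction L with
  | nil => simp [eS, EReal.add_bot]
  | cons c t ih =>
      simp only [List.map_cons, eS, ih, ereal_add_sup]
      congr 1
      · rw [← EReal.coe_add, EReal.coe_eq_coe_iff]; push_cast; ring
      · rw [← add_assoc, ← add_assoc, add_comm (β : EReal) (α : EReal)]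

noncomputable def Mk (x y c : EReal) : Matrix (Fin 2) (Fin 2) EReal :=
  fun i j => if i = 0 then (if j = 0 then x else c) else (if j = 0 then ⊥ else y)

lemma isUT_Mk (x y c : EReal) : IsUT (Mk x y c) := by
  intro i j hij
  fin_cases i <;> fin_cases j <;> simp_all [Mk]

lemma iSup_fin2 (f : Fin 2 → EReal) : (⨆ k, f k) = f 0 ⊔ f 1 := by
  apply le_antisymm
  · exact iSup_le fun k => by fin_cases k; exacts [le_sup_left, le_sup_right]
  · exact sup_le (le_iSup f 0) (le_iSup f 1)

lemma tmul_Mk (x1 y1 c1 x2 y2 c2 : EReal) :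
    tmul (Mk x1 y1 c1) (Mk x2 y2 c2) = Mk (x1 + x2) (y1 + y2) ((x1 + c2) ⊔ (c1 + y2)) := by
  funext i j
  show (⨆ k, Mk x1 y1 c1 i k + Mk x2 y2 c2 k j) = _
  rw [iSup_fin2]
  fin_cases i <;> fin_cases j <;>
    simp [Mk, EReal.add_bot, EReal.bot_add]

lemma Mk_eq {x y c x' y' c' : EReal} (hx : x = x') (hy : y = y') (hc : c = c') :
    Mk x y c = Mk x' y' c' := by subst hx; subst hy; subst hc; rfl

lemma Mk_inj_x {x y c x' y' c' : EReal} (h : Mk x y c = Mk x' y' c') : x = x' := by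
  have := congrFun (congrFun h 0) 0
  simpa [Mk] using this

lemma Mk_inj_c {x y c x' y' c' : EReal} (h : Mk x y c = Mk x' y' c') : c = c' := by
  have := congrFun (congrFun h 0) 1
  simpa [Mk] using this

lemma tProd_assign (α β : ℝ) (l : List Bool) :
    tProd (l.map fun s => if s then Mk (β : EReal) 0 0 else Mk (α : EReal) 0 ⊥) =
    Mk ((α * (l.count false : ℝ) + β * (l.count true : ℝ) : ℝ) : EReal) 0 (eS α β (gam l)) := by
  induction l with
  | nil =>
      show tOne = _
      funext i j
      fin_cases i <;> fin_cases j <;> simp [tOne, Mk, eS, gam]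
  | cons x t ih =>
      show tmul _ (tProd (t.map _)) = _
      rw [ih]
      cases x
      · show tmul (Mk (α : EReal) 0 ⊥) _ = _
        rw [tmul_Mk]
        refine Mk_eq ?_ (by simp) ?_
        · rw [← EReal.coe_add, EReal.coe_eq_coe_iff]
          simp [List.count_cons]
          try (push_cast; ring)
        · show _ = eS α β ((gam t).map (· + 1))
          rw [eS_map_succ]
          simp [EReal.add_bot]
      · show tmul (Mk (β : EReal) 0 0) _ = _
        rw [tmul_Mk]
        refine Mk_eq ?_ (by simp) ?_
        · rw [← EReal.coe_add, EReal.coe_eq_coe_iff]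
          simp [List.count_cons]
          try (push_cast; ring)
        · show _ = eS α β (0 :: gam t)
          rw [eS]
          push_cast
          rw [mul_zero, add_zero, sup_comm]

/-! ### Evaluation lemmas for `eS` -/

lemma eS_le (α β : ℝ) {L : List ℕ} : ∀ {i : ℕ} {x : ℕ}, L[i]? = some x →
    ((α * (x : ℝ) + β * (i : ℝ) : ℝ) : EReal) ≤ eS α β L := by
  induction L with
  | nil => intro i x h; simp at h
  | cons c t ih =>
      intro i x h
      match i with
      | 0 =>
          simp only [List.getElem?_cons_zero, Option.some_inj] at h
          subst h
          rw [eS]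
          refine le_trans (le_of_eq ?_) le_sup_left
          norm_num
      | (j+1) =>
          rw [List.getElem?_cons_succ] at h
          have h1 := ih h
          rw [eS]
          refine le_trans (le_of_eq ?_) (le_trans (add_le_add_right h1 (β : EReal)) le_sup_right)
          rw [← EReal.coe_add, EReal.coe_eq_coe_iff]
          push_cast; ring

lemma eS_attained (α β : ℝ) {L : List ℕ} (hL : L ≠ []) :
    ∃ (i x : ℕ), L[i]? = some x ∧ eS α β L = ((α * (x : ℝ) + β * (i : ℝ) : ℝ) : EReal) := by
  induction L with
  | nil => exact absurd rfl hL
  | cons c t ih =>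
      match t with
      | [] =>
          refine ⟨0, c, rfl, ?_⟩
          rw [eS, eS, EReal.add_bot, sup_bot_eq]
          norm_num
      | d :: t' =>
          obtain ⟨i, x, hget, hval⟩ := ih (by simp)
          rcases le_total (α * (c : ℝ)) (β + (α * (x : ℝ) + β * (i : ℝ))) with hle | hle
          · refine ⟨i + 1, x, by simpa using hget, ?_⟩
            rw [eS, hval, ← EReal.coe_add, sup_eq_right.2 (EReal.coe_le_coe_iff.2 hle),
              EReal.coe_eq_coe_iff]
            push_cast; ring
          · refine ⟨0, c, rfl, ?_⟩
            rw [eS, hval, ← EReal.coe_add, sup_eq_left.2 (EReal.coe_le_coe_iff.2 hle),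
              EReal.coe_eq_coe_iff]
            norm_num

/-! ### Basic facts about `gam` -/

lemma gam_length (l : List Bool) : (gam l).length = l.count true := by
  induction l with
  | nil => rfl
  | cons x t ih =>
      cases x <;> simp [gam, List.count_cons, ih]

lemma gam_sorted (l : List Bool) : (gam l).Pairwise (· ≤ ·) := by
  induction l with
  | nil => exact List.Pairwise.nil
  | cons x t ih =>
      cases x
      · exact ih.map _ (fun a b h => by omega)
      · exact List.pairwise_cons.2 ⟨fun x _ => Nat.zero_le x, ih⟩

lemma bool_count (l : List Bool) : l.count true + l.count false = l.length := by
  induction l with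
  | nil => rfl
  | cons x t ih => cases x <;> (simp [List.count_cons]; omega)

lemma gam_nil_of_count (l : List Bool) (h : l.count true = 0) : gam l = [] := by
  have := gam_length l
  rw [h] at this
  exact List.length_eq_zero_iff.1 this

lemma gam_reconstruct : ∀ w v : List Bool, gam w = gam v →
    w.count false = v.count false → w = v := by
  intro w
  induction w with
  | nil =>
      intro v h1 h2
      have hv1 : v.count true = 0 := by
        rw [← gam_length, ← h1]; rfl
      have : v.length = 0 := by
        rw [← bool_count v, hv1]
        simp at h2 ⊢
        omega
      exact (List.length_eq_zero_iff.1 this).symm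
  | cons x t ih =>
      intro v h1 h2
      match v, x with
      | [], b =>
          exfalso
          have h1' : gam (b :: t) = [] := h1
          have hc : (b :: t).count true = 0 := by rw [← gam_length, h1']; rfl
          have h2' : (b :: t).count false = 0 := by simpa using h2
          have := bool_count (b :: t)
          rw [hc, h2'] at this
          simp at this
      | true :: v', true =>
          have h1' : (0 : ℕ) :: gam t = 0 :: gam v' := h1
          have h2' : t.count false = v'.count false := by simpa [List.count_cons] using h2
          rw [ih v' (by simpa using h1') h2']
      | false :: v', false =>
          have h1' : (gam t).map (· + 1) = (gam v').map (· + 1) := h1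
          have hinj : Function.Injective (· + 1 : ℕ → ℕ) := fun a b h => by simpa using h
          have h2' : t.count false = v'.count false := by simpa [List.count_cons] using h2
          rw [ih v' (List.map_injective_iff.2 hinj h1') h2']
      | true :: v', false =>
          exfalso
          have h1' : (gam t).map (· + 1) = 0 :: gam v' := h1
          match hgt : gam t with
          | [] => rw [hgt] at h1'; simp at h1'
          | c :: r => rw [hgt] at h1'; simp at h1'
      | false :: v', true =>
          exfalso
          have h1' : (0 : ℕ) :: gam t = (gam v').map (· + 1) := h1
          match hgv : gam v' with
          | [] => rw [hgv] at h1'; simp at h1'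
          | c :: r => rw [hgv] at h1'; simp at h1'

/-! ### Block structure -/

lemma bl_nil : blockList ([] : List Bool) = [] := rfl

lemma bl_single (x : Bool) : blockList [x] = [x] := List.destutter_singleton _

lemma bl_cc_same (x : Bool) (t : List Bool) :
    blockList (x :: x :: t) = blockList (x :: t) := by
  unfold blockList
  rw [List.destutter_cons', List.destutter_cons',
    List.destutter'_cons_neg _ (by simp : ¬ x ≠ x)]

lemma bl_cc_ne {x y : Bool} (h : x ≠ y) (t : List Bool) :
    blockList (x :: y :: t) = x :: blockList (y :: t) := by
  unfold blockList
  rw [List.destutter_cons', List.destutter_cons',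
    List.destutter'_cons_pos _ h]

lemma bl_count_mono (x : Bool) (t : List Bool) :
    (blockList t).count true ≤ (blockList (x :: t)).count true := by
  match t with
  | [] => simp [bl_nil]
  | y :: t' =>
      by_cases hxy : x = y
      · subst hxy; rw [bl_cc_same]
      · rw [bl_cc_ne hxy, List.count_cons]
        split <;> omega

lemma count_true_bl_zero : ∀ l : List Bool,
    (blockList l).count true = 0 → l.count true = 0 := by
  intro l
  induction l with
  | nil => intro; rfl
  | cons x t ih =>
      intro h
      match t, x with
      | [], x =>
          rw [bl_single] at h
          simpa using h
      | y :: t', x =>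
          by_cases hxy : x = y
          · subst hxy
            rw [bl_cc_same] at h
            have h2 := ih h
            cases x
            · simpa [List.count_cons] using h2
            · exfalso; simp [List.count_cons] at h2
          · rw [bl_cc_ne hxy] at h
            cases x
            · simpa [List.count_cons] using ih (by simpa [List.count_cons] using h)
            · simp [List.count_cons] at h

lemma gam_one_level : ∀ l : List Bool, (blockList l).count true ≤ 1 →
    ∃ m g, gam l = List.replicate m g := by
  intro l
  induction l with
  | nil => exact fun _ => ⟨0, 0, rfl⟩
  | cons x t ih =>
      intro h
      have ht : (blockList t).count true ≤ 1 := le_trans (bl_count_mono x t) h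
      cases x
      · obtain ⟨m, g, hmg⟩ := ih ht
        exact ⟨m, g + 1, by simp [gam, hmg, List.map_replicate]⟩
      · match t with
        | [] => exact ⟨1, 0, rfl⟩
        | true :: t'' =>
            obtain ⟨m, g, hmg⟩ := ih ht
            have hg : gam (true :: t'') = 0 :: gam t'' := rfl
            match m, hmg with
            | 0, hmg => rw [hg] at hmg; simp at hmg
            | m + 1, hmg =>
                have hg0 : g = 0 := by
                  rw [hg, List.replicate_succ] at hmg
                  exact (List.cons.injEq _ _ _ _ ▸ hmg).1.symm
                subst hg0
                exact ⟨m + 2, 0, by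
                  show (0 : ℕ) :: gam (true :: t'') = _
                  rw [hmg, ← List.replicate_succ]⟩
        | false :: t'' =>
            rw [bl_cc_ne (by simp) _] at h
            simp [List.count_cons] at h
            have := count_true_bl_zero _ h
            have hnil : gam (false :: t'') = [] := gam_nil_of_count _ this
            exact ⟨1, 0, by show (0 : ℕ) :: gam (false :: t'') = _; rw [hnil]; rfl⟩

lemma gam_two_level : ∀ l : List Bool, (blockList l).count true ≤ 2 →
    ∃ m g k h, g ≤ h ∧ gam l = List.replicate m g ++ List.replicate k h := by
  intro l
  induction l with
  | nil => exact fun _ => ⟨0, 0, 0, 0, le_refl _, rfl⟩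
  | cons x t ih =>
      intro hcount
      have ht : (blockList t).count true ≤ 2 := le_trans (bl_count_mono x t) hcount
      cases x
      · obtain ⟨m, g, k, h, hgh, hmg⟩ := ih ht
        refine ⟨m, g + 1, k, h + 1, by omega, ?_⟩
        show (gam t).map (· + 1) = _
        rw [hmg]
        simp [List.map_replicate]
      · match t with
        | [] => exact ⟨1, 0, 0, 0, le_refl _, rfl⟩
        | true :: t'' =>
            obtain ⟨m, g, k, h, hgh, hmg⟩ := ih ht
            have hg : gam (true :: t'') = 0 :: gam t'' := rfl
            match m, hmg with
            | 0, hmg =>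
                rw [List.replicate_zero, List.nil_append] at hmg
                match k, hmg with
                | 0, hmg => rw [hg] at hmg; simp at hmg
                | k + 1, hmg =>
                    have hh0 : h = 0 := by
                      rw [hg, List.replicate_succ] at hmg
                      exact (List.cons.injEq _ _ _ _ ▸ hmg).1.symm
                    subst hh0
                    refine ⟨k + 2, 0, 0, 0, le_refl _, ?_⟩
                    show (0 : ℕ) :: gam (true :: t'') = _
                    rw [hmg]
                    simp [List.replicate_succ]
            | m + 1, hmg =>
                have hg0 : g = 0 := by
                  rw [hg, List.replicate_succ, List.cons_append] at hmg
                  exact (List.cons.injEq _ _ _ _ ▸ hmg).1.symm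
                subst hg0
                refine ⟨m + 2, 0, k, h, by omega, ?_⟩
                show (0 : ℕ) :: gam (true :: t'') = _
                rw [hmg]
                simp [List.replicate_succ]
        | false :: t'' =>
            rw [bl_cc_ne (by simp) _] at hcount
            simp [List.count_cons] at hcount
            obtain ⟨m, g, hmg⟩ := gam_one_level _ hcount
            refine ⟨1, 0, m, g, Nat.zero_le _, ?_⟩
            show (0 : ℕ) :: gam (false :: t'') = _
            rw [hmg]
            rfl

/-! ### The analytic core -/

lemma level_one (q e : ℕ) (hq : q ≠ 0) (L' : List ℕ) (hlen : L'.length = q)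
    (hS : ∀ α β : ℝ, eS α β (List.replicate q e) = eS α β L') :
    L' = List.replicate q e := by
  have hne : (List.replicate q e : List ℕ) ≠ [] := by
    intro hnil
    exact hq (by simpa using congrArg List.length hnil)
  have hval : ∀ α : ℝ, eS α 0 (List.replicate q e) = ((α * (e : ℝ) : ℝ) : EReal) := by
    intro α
    obtain ⟨i, x, hget, hv⟩ := eS_attained α 0 hne
    rw [List.getElem?_replicate] at hget
    by_cases hiq : i < q
    · rw [if_pos hiq] at hget
      have hxe : x = e := (Option.some_inj.1 hget).symm
      subst hxe
      rw [hv, EReal.coe_eq_coe_iff]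
      ring
    · rw [if_neg hiq] at hget; simp at hget
  refine List.eq_replicate_iff.2 ⟨hlen, ?_⟩
  intro b hb
  obtain ⟨i, hget⟩ := List.mem_iff_getElem?.1 hb
  have h1 := eS_le 1 0 hget
  rw [← hS 1 0, hval 1] at h1
  have h2 := eS_le (-1) 0 hget
  rw [← hS (-1) 0, hval (-1)] at h2
  rw [EReal.coe_le_coe_iff] at h1 h2
  have hb1 : (b : ℝ) ≤ e := by linarith
  have hb2 : (e : ℝ) ≤ b := by linarith
  have : (b : ℝ) = e := le_antisymm hb1 hb2
  exact_mod_cast this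

lemma level_two (m k g h : ℕ) (hm : m ≠ 0) (hk : k ≠ 0) (hgh : g < h)
    (L' : List ℕ) (hlen : L'.length = m + k) (hsort : L'.Pairwise (· ≤ ·))
    (hS : ∀ α β : ℝ, eS α β (List.replicate m g ++ List.replicate k h) = eS α β L') :
    L' = List.replicate m g ++ List.replicate k h := by
  set q := m + k with hq
  set L := List.replicate m g ++ List.replicate k h with hL
  have hLlen : L.length = q := by simp [hL, hq]
  have getL : ∀ i : ℕ, L[i]? = if i < m then some g else if i < q then some h else none := by
    intro i
    by_cases h1 : i < m
    · rw [hL, List.getElem?_append_left (by simpa using h1), List.getElem?_replicate,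
        if_pos h1, if_pos h1]
    · rw [hL, List.getElem?_append_right (by simpa using not_lt.1 h1), List.getElem?_replicate,
        List.length_replicate, if_neg h1]
      by_cases h2 : i < q
      · rw [if_pos (by omega), if_pos h2]
      · rw [if_neg (by omega), if_neg h2]
  have memL : ∀ i x : ℕ, L[i]? = some x → (i < m ∧ x = g) ∨ (m ≤ i ∧ i < q ∧ x = h) := by
    intro i x hx
    rw [getL] at hx
    by_cases h1 : i < m
    · rw [if_pos h1] at hx; exact Or.inl ⟨h1, (Option.some_inj.1 hx).symm⟩
    · rw [if_neg h1] at hx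
      by_cases h2 : i < q
      · rw [if_pos h2] at hx; exact Or.inr ⟨by omega, h2, (Option.some_inj.1 hx).symm⟩
      · rw [if_neg h2] at hx; simp at hx
  have hmR : (1 : ℝ) ≤ (m : ℝ) := by exact_mod_cast Nat.one_le_iff_ne_zero.2 hm
  have hkR : (1 : ℝ) ≤ (k : ℝ) := by exact_mod_cast Nat.one_le_iff_ne_zero.2 hk
  have hghR : (g : ℝ) + 1 ≤ (h : ℝ) := by exact_mod_cast hgh
  have hqR : (q : ℝ) = (m : ℝ) + (k : ℝ) := by rw [hq]; push_cast; ring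
  have hq0 : (0 : ℝ) ≤ (q : ℝ) := Nat.cast_nonneg q
  have hqhg : (q : ℝ) ≤ (q : ℝ) * ((h : ℝ) - g) :=
    calc (q : ℝ) = q * 1 := (mul_one _).symm
    _ ≤ (q : ℝ) * ((h : ℝ) - g) := mul_le_mul_of_nonneg_left (by linarith) hq0
  have hLne : L ≠ [] := by
    intro hnil
    rw [hnil] at hLlen
    simp [hq] at hLlen
    omega
  have hLm : L[m]? = some h := by
    rw [getL, if_neg (lt_irrefl m), if_pos (by omega)]
  have hLm1 : L[m-1]? = some g := by
    rw [getL, if_pos (by omega)]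
  have hm1cast : ((m - 1 : ℕ) : ℝ) = (m : ℝ) - 1 := by
    rw [Nat.cast_sub (Nat.one_le_iff_ne_zero.2 hm)]; norm_num
  -- the four evaluations of eS on L
  have val1 : eS 1 0 L = ((h : ℝ) : EReal) := by
    apply le_antisymm
    · obtain ⟨i, x, hget, hv⟩ := eS_attained 1 0 hLne
      rw [hv, EReal.coe_le_coe_iff]
      rcases memL i x hget with ⟨_, rfl⟩ | ⟨_, _, rfl⟩ <;> (norm_num; try linarith)
    · refine le_trans (le_of_eq ?_) (eS_le 1 0 hLm)
      rw [EReal.coe_eq_coe_iff]; ring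
  have val2 : eS (-1) 0 L = ((-(g : ℝ) : ℝ) : EReal) := by
    apply le_antisymm
    · obtain ⟨i, x, hget, hv⟩ := eS_attained (-1) 0 hLne
      rw [hv, EReal.coe_le_coe_iff]
      rcases memL i x hget with ⟨_, rfl⟩ | ⟨_, _, rfl⟩ <;> (norm_num; try linarith)
    · refine le_trans (le_of_eq ?_) (eS_le (-1) 0 hLm1)
      rw [EReal.coe_eq_coe_iff]; ring
  have val3 : eS (q : ℝ) (-1) L = (((q : ℝ) * h - m : ℝ) : EReal) := by
    apply le_antisymm
    · obtain ⟨i, x, hget, hv⟩ := eS_attained (q : ℝ) (-1) hLne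
      rw [hv, EReal.coe_le_coe_iff]
      have hi0 : (0 : ℝ) ≤ (i : ℝ) := Nat.cast_nonneg i
      rcases memL i x hget with ⟨_, rfl⟩ | ⟨hi, _, rfl⟩
      · have hmq : (m : ℝ) + 1 ≤ (q : ℝ) := by linarith
        nlinarith
      · have hiR : (m : ℝ) ≤ (i : ℝ) := by exact_mod_cast hi
        nlinarith
    · refine le_trans (le_of_eq ?_) (eS_le (q : ℝ) (-1) hLm)
      rw [EReal.coe_eq_coe_iff]; ring
  have val4 : eS (-(q : ℝ)) 1 L = (((m : ℝ) - 1 - (q : ℝ) * g : ℝ) : EReal) := by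
    apply le_antisymm
    · obtain ⟨i, x, hget, hv⟩ := eS_attained (-(q : ℝ)) 1 hLne
      rw [hv, EReal.coe_le_coe_iff]
      rcases memL i x hget with ⟨hi, rfl⟩ | ⟨_, hi, rfl⟩
      · have hiR : (i : ℝ) ≤ (m : ℝ) - 1 := by
          have : (i : ℝ) + 1 ≤ (m : ℝ) := by exact_mod_cast hi
          linarith
        nlinarith
      · have hiR : (i : ℝ) + 1 ≤ (q : ℝ) := by exact_mod_cast hi
        nlinarith
    · refine le_trans (le_of_eq ?_) (eS_le (-(q : ℝ)) 1 hLm1)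
      rw [EReal.coe_eq_coe_iff, hm1cast]; ring
  -- bounds on entries of L'
  have hSne : L' ≠ [] := by
    intro hnil
    rw [hnil] at hlen
    simp at hlen
    omega
  have entup : ∀ i x : ℕ, L'[i]? = some x → x ≤ h := by
    intro i x hx
    have h1 := eS_le 1 0 hx
    rw [← hS 1 0, val1, EReal.coe_le_coe_iff] at h1
    have : (x : ℝ) ≤ h := by linarith
    exact_mod_cast this
  have entlo : ∀ i x : ℕ, L'[i]? = some x → g ≤ x := by
    intro i x hx
    have h1 := eS_le (-1) 0 hx
    rw [← hS (-1) 0, val2, EReal.coe_le_coe_iff] at h1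
    have : (g : ℝ) ≤ x := by linarith
    exact_mod_cast this
  have pin1 : L'[m]? = some h := by
    obtain ⟨i, x, hget, hv⟩ := eS_attained (q : ℝ) (-1) hSne
    have heq : (q : ℝ) * x + (-1) * i = (q : ℝ) * h - m := by
      have h2 := (val3.symm.trans ((hS (q : ℝ) (-1)).trans hv)).symm
      exact EReal.coe_eq_coe_iff.1 h2
    have hi0 : (0 : ℝ) ≤ (i : ℝ) := Nat.cast_nonneg i
    have hmq : (m : ℝ) + 1 ≤ (q : ℝ) := by linarith
    have hxh : x = h := by
      by_contra hne
      have hxlt : x < h := lt_of_le_of_ne (entup i x hget) hne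
      have hxR : (x : ℝ) + 1 ≤ (h : ℝ) := by exact_mod_cast hxlt
      nlinarith
    subst hxh
    have him : (i : ℝ) = (m : ℝ) := by linarith
    have : i = m := by exact_mod_cast him
    exact this ▸ hget
  have pin2 : L'[m-1]? = some g := by
    obtain ⟨i, x, hget, hv⟩ := eS_attained (-(q : ℝ)) 1 hSne
    have heq : (-(q : ℝ)) * x + 1 * i = (m : ℝ) - 1 - (q : ℝ) * g := by
      have h2 := (val4.symm.trans ((hS (-(q : ℝ)) 1).trans hv)).symm
      exact EReal.coe_eq_coe_iff.1 h2
    have hiq : i < L'.length := (List.getElem?_eq_some_iff.1 hget).fst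
    have hiR : (i : ℝ) + 1 ≤ (q : ℝ) := by
      rw [hlen] at hiq
      exact_mod_cast hiq
    have hxg : x = g := by
      by_contra hne
      have hxgt : g < x := lt_of_le_of_ne (entlo i x hget) (Ne.symm hne)
      have hxR : (g : ℝ) + 1 ≤ (x : ℝ) := by exact_mod_cast hxgt
      nlinarith
    subst hxg
    have him : (i : ℝ) + 1 = (m : ℝ) := by linarith
    have : i + 1 = m := by exact_mod_cast him
    have : i = m - 1 := by omega
    exact this ▸ hget
  -- conclude entrywise
  have hm1len : m - 1 < L'.length := by rw [hlen]; omega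
  have hmlen : m < L'.length := by rw [hlen]; omega
  have hgetm : L'[m]'hmlen = h := by
    rw [List.getElem?_eq_getElem hmlen] at pin1
    exact Option.some_inj.1 pin1
  have hgetm1 : L'[m-1]'hm1len = g := by
    rw [List.getElem?_eq_getElem hm1len] at pin2
    exact Option.some_inj.1 pin2
  have hpair := List.pairwise_iff_getElem.1 hsort
  apply List.ext_getElem (by rw [hlen, hLlen])
  intro n h1 h2
  have hLn := getL n
  rw [List.getElem?_eq_getElem h2] at hLn
  by_cases hn : n < m
  · rw [if_pos hn] at hLn
    have hLng : L[n]'h2 = g := Option.some_inj.1 hLn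
    have hub : L'[n]'h1 ≤ g := by
      rcases Nat.lt_or_ge n (m - 1) with hlt | hge
      · have := hpair n (m-1) h1 hm1len hlt
        omega
      · have : n = m - 1 := by omega
        subst this
        omega
    have hlb : g ≤ L'[n]'h1 := entlo n _ (List.getElem?_eq_getElem h1)
    omega
  · rw [if_neg hn, if_pos (by rw [hLlen] at h2; exact h2)] at hLn
    have hLnh : L[n]'h2 = h := Option.some_inj.1 hLn
    have hlb : h ≤ L'[n]'h1 := by
      rcases Nat.lt_or_ge m n with hlt | hge
      · have := hpair m n hmlen h1 hlt
        omega
      · have : n = m := by omega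
        subst this
        omega
    have hub : L'[n]'h1 ≤ h := entup n _ (List.getElem?_eq_getElem h1)
    omega

lemma level_master (m k g h : ℕ) (hgh : g ≤ h)
    (L' : List ℕ) (hlen : L'.length = m + k) (hsort : L'.Pairwise (· ≤ ·))
    (hS : ∀ α β : ℝ, eS α β (List.replicate m g ++ List.replicate k h) = eS α β L') :
    L' = List.replicate m g ++ List.replicate k h := by
  by_cases hq : m + k = 0
  · have hm : m = 0 := by omega
    have hk : k = 0 := by omega
    subst hm; subst hk
    simpa using List.length_eq_zero_iff.1 (by rw [hlen])
  by_cases hm : m = 0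
  · subst hm
    simp only [List.replicate_zero, List.nil_append] at hS ⊢
    exact level_one k h (by omega) L' (by omega) hS
  by_cases hk : k = 0
  · subst hk
    simp only [List.replicate_zero, List.append_nil] at hS ⊢
    exact level_one m g hm L' (by omega) hS
  by_cases hgh' : g = h
  · subst hgh'
    rw [← List.replicate_add] at hS ⊢
    exact level_one (m + k) g hq L' hlen hS
  · exact level_two m k g h hm hk (lt_of_le_of_ne hgh hgh') L' hlen hsort hS

/-! ### Putting everything together -/

lemma key_lemma (w v : List Bool) (h : UTId 2 w v)
    (hb : (blockList w).count true ≤ 2) : v = w := by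
  have heq : ∀ α β : ℝ,
      Mk ((α * (w.count false : ℝ) + β * (w.count true : ℝ) : ℝ) : EReal) 0 (eS α β (gam w)) =
      Mk ((α * (v.count false : ℝ) + β * (v.count true : ℝ) : ℝ) : EReal) 0 (eS α β (gam v)) := by
    intro α β
    rw [← tProd_assign α β w, ← tProd_assign α β v]
    exact h _ (fun s => by cases s <;> exact isUT_Mk _ _ _)
  have hx : ∀ α β : ℝ, α * (w.count false : ℝ) + β * (w.count true : ℝ) =
      α * (v.count false : ℝ) + β * (v.count true : ℝ) :=
    fun α β => EReal.coe_eq_coe_iff.1 (Mk_inj_x (heq α β))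
  have hcf : w.count false = v.count false := by
    have := hx 1 0
    simp at this
    exact_mod_cast this
  have hct : w.count true = v.count true := by
    have := hx 0 1
    simp at this
    exact_mod_cast this
  have hSe : ∀ α β : ℝ, eS α β (gam w) = eS α β (gam v) :=
    fun α β => Mk_inj_c (heq α β)
  obtain ⟨m, g, k, h', hgh, hrep⟩ := gam_two_level w hb
  have hlen' : (gam v).length = m + k := by
    rw [gam_length, ← hct, ← gam_length, hrep]
    simp
  have hgv : gam v = List.replicate m g ++ List.replicate k h' := by
    refine level_master m k g h' hgh (gam v) hlen' (gam_sorted v) ?_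
    intro α β
    rw [← hrep]
    exact hSe α β
  exact (gam_reconstruct w v (by rw [hrep, hgv]) hcf).symm

lemma blockList_map_not : ∀ l : List Bool,
    blockList (l.map not) = (blockList l).map not := by
  intro l
  induction l with
  | nil => rfl
  | cons x t ih =>
      match t with
      | [] => simp [bl_single]
      | y :: t' =>
          by_cases hxy : x = y
          · subst hxy
            rw [List.map_cons, List.map_cons, bl_cc_same, bl_cc_same, ← List.map_cons]
            exact ih
          · have hne : ¬ (not x = not y) := by
              cases x <;> cases y <;> simp_all
            rw [List.map_cons, List.map_cons, bl_cc_ne hne, bl_cc_ne hxy]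
            rw [List.map_cons] at ih
            rw [ih, List.map_cons]

lemma count_true_map_not (l : List Bool) : (l.map not).count true = l.count false := by
  have : (true : Bool) = not false := rfl
  rw [this, List.count_map_of_injective _ not (fun a b => by cases a <;> cases b <;> simp)]

lemma UTId_map_not {w v : List Bool} (h : UTId 2 w v) :
    UTId 2 (w.map not) (v.map not) := by
  intro φ hφ
  have := h (φ ∘ not) (fun s => hφ _)
  simpa [List.map_map] using this


/-- A word over a two-letter alphabet with at most five blocks is an isoterm for `UT_2`. -/
theorem isoterm_of_le_five_blocks (w : List Bool) (hw : w ≠ [])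
    (hblocks : (blockList w).length ≤ 5)
    (v : List Bool) (hv : v ≠ []) (h : UTId 2 w v) : v = w := by
  have hcount := bool_count (blockList w)
  by_cases hb : (blockList w).count true ≤ 2
  · exact key_lemma w v h hb
  · have hbf : (blockList w).count false ≤ 2 := by omega
    have h2 : (blockList (w.map not)).count true ≤ 2 := by
      rw [blockList_map_not, count_true_map_not]
      exact hbf
    have := key_lemma (w.map not) (v.map not) (UTId_map_not h) h2
    have hinj : Function.Injective (not : Bool → Bool) := fun a b => by
      cases a <;> cases b <;> simp
    exact List.map_injective_iff.2 hinj this
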